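/- Under the assumptions b - b_{N+1} = vλ, K = μSN/(rv), t^{N+1} = rvK/((N+1)b_{N+1}), and the storage constraint (1-μ)S/(vλ) > t^{N+1}, the bandwidth used for data migration satisfies b_{N+1}/b > μN/(N+1-μ). -/

import Mathlib

theorem migration_bandwidth_fraction (N : ℕ) (hN : 1 ≤ N)
    (b v lam S μ K r bN1 tN1 : ℝ)
    (hb : 0 < b) (hv : 0 < v) (hlam : 0 < lam) (hS : 0 < S)
    (hμ0 : 0 < μ) (hμ1 : μ < 1) (hK : 0 < K) (hr : 0 < r) (hbN1 : 0 < bN1)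
    (hbN1b : bN1 < b)
    (hband : b - bN1 = v * lam)
    (hKeq : K = μ * S * N / (r * v))
    (ht : tN1 = r * v * K / ((N + 1) * bN1))
    (hstorage : (1 - μ) * S / (v * lam) > tN1) :
    bN1 / b > μ * N / (N + 1 - μ) := by
  have hN1 : (1 : ℝ) ≤ (N : ℝ) := by exact_mod_cast hN
  have hNpos : (0 : ℝ) < N := by linarith
  have hden : (0 : ℝ) < (N : ℝ) + 1 - μ := by linarith
  subst hKeq ht
  rw [gt_iff_lt, div_lt_div_iff₀ hden hb]
  rw [gt_iff_lt, div_lt_div_iff₀ (by positivity) (by positivity)] at hstorage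
  field_simp at hstorage
  rw [show v * μ * (N : ℝ) * lam = μ * N * (v * lam) by ring, ← hband] at hstorage
  nlinarith [mul_pos hS hbN1, mul_pos hμ0 (mul_pos hNpos hS), sq_nonneg (S - 1)]
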